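/- Let h ∈ ℂ[X,Y] have non-empty right Newton polygon whose first right vertex of Δ_h lies on the horizontal axis; let F be the first segment of the right polygon (the one nearest the horizontal axis) and (μ,ν) its upper end. Then every segment T of the right Newton polygon of ∂h/∂Y that is not of the form S − (0,1) for a segment S of the right polygon of h (a non-standard segment) satisfies (|T₁|/|T₂|)·σ(T) ≤ (|F₁|/|F₂|)·σ(F), and if such T is parallel to F then in(∂h/∂Y, T) = ∂/∂Y in(h, F). -/

import Mathlib

open scoped Classical

noncomputable section

/-- A (candidate) segment in the plane, given by its two lattice endpoints. -/
structure Seg where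
  P : ℕ × ℕ
  Q : ℕ × ℕ

/-- the support of a polynomial in two variables, as a finite set of pairs `(α,β)`. -/
def supp (h : MvPolynomial (Fin 2) ℂ) : Finset (ℕ × ℕ) :=
  h.support.image fun d => (d 0, d 1)

/-- the coefficient `h_{αβ}` of `X^α Y^β` in `h`. -/
def coeff2 (h : MvPolynomial (Fin 2) ℂ) (p : ℕ × ℕ) : ℂ :=
  MvPolynomial.coeff (Finsupp.single 0 p.1 + Finsupp.single 1 p.2) h

/-- the linear functional whose level lines are parallel to `S`, normalized so that
(for a right-polygon segment, `S.P.2 < S.Q.2`) its gradient points to the right. -/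
def lfun (S : Seg) (v : ℕ × ℕ) : ℤ :=
  ((S.Q.2 : ℤ) - S.P.2) * v.1 - ((S.Q.1 : ℤ) - S.P.1) * v.2

/-- the linear functional whose level lines are parallel to `S`, normalized so that
(for a top-polygon segment, `S.P.1 < S.Q.1`) its gradient points upwards. -/
def gfun (S : Seg) (v : ℕ × ℕ) : ℤ :=
  ((S.Q.1 : ℤ) - S.P.1) * v.2 - ((S.Q.2 : ℤ) - S.P.2) * v.1

/-- `v` lies on the segment with endpoints `S.P` and `S.Q`
(collinear and inside the bounding box). -/
def OnSeg (S : Seg) (v : ℕ × ℕ) : Prop :=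
  lfun S v = lfun S S.P ∧
  min S.P.1 S.Q.1 ≤ v.1 ∧ v.1 ≤ max S.P.1 S.Q.1 ∧
  min S.P.2 S.Q.2 ≤ v.2 ∧ v.2 ≤ max S.P.2 S.Q.2

/-- `S` is a segment (one-dimensional boundary face) of the right Newton polygon of `h`:
its endpoints (ordered by increasing ordinate) are in the support, the whole support lies
weakly to the left of the line through `S` (the supporting line has outward normal with
positive first coordinate), and `S` is a maximal face: every support point on this line has
ordinate between those of the endpoints. Such segments are exactly the boundary faces on
the right of the Newton diagram joining the lines `β = ord_Y h` and `β = deg_Y h`. -/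
def RightSeg (h : MvPolynomial (Fin 2) ℂ) (S : Seg) : Prop :=
  S.P ∈ supp h ∧ S.Q ∈ supp h ∧ S.P.2 < S.Q.2 ∧
  (∀ v ∈ supp h, lfun S v ≤ lfun S S.P) ∧
  (∀ v ∈ supp h, lfun S v = lfun S S.P → S.P.2 ≤ v.2 ∧ v.2 ≤ S.Q.2)

/-- `S` is a segment of the top Newton polygon of `h` (endpoints ordered by increasing
abscissa; the supporting line has outward normal with positive second coordinate). -/
def TopSeg (h : MvPolynomial (Fin 2) ℂ) (S : Seg) : Prop :=
  S.P ∈ supp h ∧ S.Q ∈ supp h ∧ S.P.1 < S.Q.1 ∧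
  (∀ v ∈ supp h, gfun S v ≤ gfun S S.P) ∧
  (∀ v ∈ supp h, gfun S v = gfun S S.P → S.P.1 ≤ v.1 ∧ v.1 ≤ S.Q.1)

/-- `σ(S)` for a right-polygon segment (endpoints ordered by increasing ordinate):
`0` if `S` is vertical, otherwise minus the sign of the slope of `S`. -/
def sigmaR (S : Seg) : ℤ :=
  if S.P.1 = S.Q.1 then 0 else if S.P.1 < S.Q.1 then -1 else 1

/-- `σ(S)` for a top-polygon segment (endpoints ordered by increasing abscissa). -/
def sigmaT (S : Seg) : ℤ :=
  if S.P.2 = S.Q.2 then 0 else if S.P.2 < S.Q.2 then -1 else 1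

/-- `|S₁|`, the length of the projection of `S` on the horizontal axis. -/
def len1 (S : Seg) : ℚ := |(S.Q.1 : ℚ) - S.P.1|

/-- `|S₂|`, the length of the projection of `S` on the vertical axis. -/
def len2 (S : Seg) : ℚ := |(S.Q.2 : ℚ) - S.P.2|

/-- the declivity `(|S₁|/|S₂|)·σ(S)` of a right-polygon segment. -/
def decl (S : Seg) : ℚ := len1 S / len2 S * (sigmaR S : ℚ)

/-- the declivity `(|S₂|/|S₁|)·σ(S)` of a top-polygon segment. -/
def tdecl (S : Seg) : ℚ := len2 S / len1 S * (sigmaT S : ℚ)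

/-- `α(S)`: the abscissa of the intersection of the line through `S` with the
horizontal axis. -/
def alphaS (S : Seg) : ℚ := (S.P.1 : ℚ) + (S.P.2 : ℚ) * decl S

/-- `β(S)`: the ordinate of the intersection of the line through `S` with the
vertical axis. -/
def betaS (S : Seg) : ℚ := (S.P.2 : ℚ) + (S.P.1 : ℚ) * tdecl S

/-- a right-polygon segment is exceptional if it joins the horizontal axis with a
point of the form `(p, 1)`. -/
def RExcep (S : Seg) : Prop := S.P.2 = 0 ∧ S.Q.2 = 1

/-- a top-polygon segment is exceptional if it joins the vertical axis with a
point of the form `(1, q)`. -/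
def TExcep (S : Seg) : Prop := S.P.1 = 0 ∧ S.Q.1 = 1

/-- `in(h,S)`: the sum of the monomials of `h` supported on the segment `S`. -/
def inPoly (h : MvPolynomial (Fin 2) ℂ) (S : Seg) : MvPolynomial (Fin 2) ℂ :=
  ∑ p ∈ (supp h).filter (OnSeg S),
    MvPolynomial.monomial (Finsupp.single 0 p.1 + Finsupp.single 1 p.2) (coeff2 h p)


/-! ### Auxiliary lemmas -/

lemma fin2_eq (d : Fin 2 →₀ ℕ) :
    d = Finsupp.single 0 (d 0) + Finsupp.single 1 (d 1) := by
  ext i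
  fin_cases i <;> simp [Finsupp.single_apply]

lemma eval0 (a b : ℕ) :
    ((Finsupp.single (0 : Fin 2) a + Finsupp.single 1 b : (Fin 2 →₀ ℕ))) 0 = a := by
  simp [Finsupp.single_apply]

lemma eval1 (a b : ℕ) :
    ((Finsupp.single (0 : Fin 2) a + Finsupp.single 1 b : (Fin 2 →₀ ℕ))) 1 = b := by
  simp [Finsupp.single_apply]

lemma pair_eq_iff (a b c e : ℕ) :
    Finsupp.single (0 : Fin 2) a + Finsupp.single 1 b =
      Finsupp.single 0 c + Finsupp.single 1 e ↔ a = c ∧ b = e := by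
  constructor
  · intro H
    constructor
    · have := congrArg (fun f : Fin 2 →₀ ℕ => f 0) H; simpa [eval0] using this
    · have := congrArg (fun f : Fin 2 →₀ ℕ => f 1) H; simpa [eval1] using this
  · rintro ⟨rfl, rfl⟩; rfl

lemma sub_pair (a b : ℕ) :
    (Finsupp.single (0 : Fin 2) a + Finsupp.single 1 b) - Finsupp.single 1 1
      = Finsupp.single 0 a + Finsupp.single 1 (b - 1) := by
  ext i
  fin_cases i <;> simp [Finsupp.single_apply, Finsupp.tsub_apply]

lemma coeff_pderiv1 (h : MvPolynomial (Fin 2) ℂ) (a b : ℕ) :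
    MvPolynomial.coeff (Finsupp.single 0 a + Finsupp.single 1 b) (MvPolynomial.pderiv 1 h)
      = ((b : ℂ) + 1) * MvPolynomial.coeff (Finsupp.single 0 a + Finsupp.single 1 (b+1)) h := by
  induction h using MvPolynomial.induction_on' with
  | add p q hp hq => simp only [map_add, MvPolynomial.coeff_add, hp, hq]; ring
  | monomial s c =>
    obtain ⟨s0, s1, rfl⟩ : ∃ s0 s1, s = Finsupp.single 0 s0 + Finsupp.single 1 s1 :=
      ⟨s 0, s 1, fin2_eq s⟩
    rw [MvPolynomial.pderiv_monomial, sub_pair, eval1, MvPolynomial.coeff_monomial,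
      MvPolynomial.coeff_monomial]
    rcases s1 with _ | s1'
    · simp only [pair_eq_iff]
      have hne : ¬ (s0 = a ∧ 0 = b + 1) := by omega
      rw [if_neg hne]
      split_ifs <;> simp
    · simp only [pair_eq_iff]
      by_cases hs : s0 = a
      · by_cases hb : s1' = b
        · subst hs hb; simp; ring
        · have h1 : ¬ (s0 = a ∧ s1' + 1 - 1 = b) := by omega
          have h2 : ¬ (s0 = a ∧ s1' + 1 = b + 1) := by omega
          rw [if_neg h1, if_neg h2]; ring
      · have h1 : ¬ (s0 = a ∧ s1' + 1 - 1 = b) := by tauto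
        have h2 : ¬ (s0 = a ∧ s1' + 1 = b + 1) := by tauto
        rw [if_neg h1, if_neg h2]; ring

lemma mem_supp_iff {h : MvPolynomial (Fin 2) ℂ} {p : ℕ × ℕ} :
    p ∈ supp h ↔ coeff2 h p ≠ 0 := by
  unfold supp coeff2
  simp only [Finset.mem_image, MvPolynomial.mem_support_iff]
  constructor
  · rintro ⟨d, hd, rfl⟩
    simpa [← fin2_eq d] using hd
  · intro hc
    exact ⟨Finsupp.single 0 p.1 + Finsupp.single 1 p.2, hc, by
      ext <;> simp [eval0, eval1]⟩

lemma coeff2_pderiv (h : MvPolynomial (Fin 2) ℂ) (p : ℕ × ℕ) :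
    coeff2 (MvPolynomial.pderiv 1 h) p = ((p.2 : ℂ) + 1) * coeff2 h (p.1, p.2 + 1) :=
  coeff_pderiv1 h p.1 p.2

lemma mem_supp_pderiv {h : MvPolynomial (Fin 2) ℂ} {p : ℕ × ℕ} :
    p ∈ supp (MvPolynomial.pderiv 1 h) ↔ (p.1, p.2 + 1) ∈ supp h := by
  have h1 : ((p.2 : ℂ) + 1) ≠ 0 := Nat.cast_add_one_ne_zero p.2
  rw [mem_supp_iff, mem_supp_iff, coeff2_pderiv]
  simp [h1]

lemma decl_eq {S : Seg} (hS : S.P.2 < S.Q.2) :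
    decl S = ((S.P.1 : ℚ) - S.Q.1) / ((S.Q.2 : ℚ) - S.P.2) := by
  have h2 : (0:ℚ) < (S.Q.2:ℚ) - S.P.2 := by
    have : (S.P.2 : ℚ) < S.Q.2 := by exact_mod_cast hS
    linarith
  have l2 : len2 S = (S.Q.2:ℚ) - S.P.2 := abs_of_pos h2
  unfold decl sigmaR
  rcases lt_trichotomy S.P.1 S.Q.1 with hc | hc | hc
  · have l1 : len1 S = (S.Q.1:ℚ) - S.P.1 := by
      have : (S.P.1 : ℚ) < S.Q.1 := by exact_mod_cast hc
      exact abs_of_pos (by linarith)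
    rw [if_neg hc.ne, if_pos hc, l1, l2]
    push_cast
    field_simp
    ring
  · rw [if_pos hc]
    have l1 : len1 S = 0 := by
      unfold len1; rw [hc]; simp
    rw [l1, hc]
    simp
  · have l1 : len1 S = (S.P.1:ℚ) - S.Q.1 := by
      have : (S.Q.1 : ℚ) < S.P.1 := by exact_mod_cast hc
      unfold len1
      rw [abs_of_neg (by linarith)]
      ring
    rw [if_neg hc.ne', if_neg (by omega), l1, l2]
    push_cast
    field_simp

lemma onSeg_iff {S : Seg} (hS : S.P.2 < S.Q.2) (v : ℕ × ℕ) :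
    OnSeg S v ↔ lfun S v = lfun S S.P ∧ S.P.2 ≤ v.2 ∧ v.2 ≤ S.Q.2 := by
  constructor
  · rintro ⟨h1, _, _, h4, h5⟩
    refine ⟨h1, ?_, ?_⟩ <;> omega
  · rintro ⟨h1, h2, h3⟩
    have hd : (0:ℤ) < (S.Q.2:ℤ) - S.P.2 := by
      have := hS; omega
    have key : ((S.Q.2:ℤ) - S.P.2) * ((v.1:ℤ) - S.P.1)
        = ((S.Q.1:ℤ) - S.P.1) * ((v.2:ℤ) - S.P.2) := by
      unfold lfun at h1; linarith [h1]
    have hv2a : (S.P.2:ℤ) ≤ (v.2:ℤ) := by exact_mod_cast h2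
    have hv2b : (v.2:ℤ) ≤ (S.Q.2:ℤ) := by exact_mod_cast h3
    rcases le_or_gt S.P.1 S.Q.1 with he | he
    · have he' : (0:ℤ) ≤ (S.Q.1:ℤ) - S.P.1 := by
        have : (S.P.1:ℤ) ≤ S.Q.1 := by exact_mod_cast he
        linarith
      have h6 : (S.P.1:ℤ) ≤ (v.1:ℤ) := by nlinarith
      have h7 : (v.1:ℤ) ≤ (S.Q.1:ℤ) := by nlinarith
      exact ⟨h1, by omega, by omega, by omega, by omega⟩
    · have he' : (S.Q.1:ℤ) - S.P.1 ≤ 0 := by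
        have : (S.Q.1:ℤ) ≤ S.P.1 := by exact_mod_cast he.le
        linarith
      have h6 : (S.Q.1:ℤ) ≤ (v.1:ℤ) := by nlinarith
      have h7 : (v.1:ℤ) ≤ (S.P.1:ℤ) := by nlinarith
      exact ⟨h1, by omega, by omega, by omega, by omega⟩

/-- Proposition 8.1 (a),(b): suppose the right Newton polygon of `h` is non-empty and
the first right vertex of `Δ_h` lies on the horizontal axis; let `F` be the first segment
of the right polygon (so `F.P.2 = 0`). A segment `T` of the right polygon of `∂h/∂Y`
is *standard* if `T = S − (0,1)` for some segment `S` of the right polygon of `h`.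
Then every non-standard segment `T` satisfies
`(|T₁|/|T₂|)·σ(T) ≤ (|F₁|/|F₂|)·σ(F)`, and if moreover `T` is parallel to `F`
(equal declivities) then `in(∂h/∂Y, T) = ∂/∂Y in(h, F)`. -/
theorem stmt17 (h : MvPolynomial (Fin 2) ℂ) (F : Seg) (hF : RightSeg h F)
    (hax : F.P.2 = 0)
    (T : Seg) (hT : RightSeg (MvPolynomial.pderiv (1 : Fin 2) h) T)
    (hns : ¬ ∃ S : Seg, RightSeg h S ∧
      S.P = (T.P.1, T.P.2 + 1) ∧ S.Q = (T.Q.1, T.Q.2 + 1)) :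
    decl T ≤ decl F ∧
    (decl T = decl F →
      inPoly (MvPolynomial.pderiv (1 : Fin 2) h) T
        = MvPolynomial.pderiv (1 : Fin 2) (inPoly h F)) := by
  classical
  obtain ⟨hFP, hFQ, hFlt, hFsupp, hFmax⟩ := hF
  obtain ⟨hTP, hTQ, hTlt, hTsupp, hTmax⟩ := hT
  set h' := MvPolynomial.pderiv (1 : Fin 2) h with hh'
  set S' : Seg := ⟨(T.P.1, T.P.2 + 1), (T.Q.1, T.Q.2 + 1)⟩ with hS'
  set d : ℤ := (T.Q.2 : ℤ) - T.P.2 with hdd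
  set e : ℤ := (T.Q.1 : ℤ) - T.P.1 with hee
  have hdpos : 0 < d := by rw [hdd]; omega
  have lS'v : ∀ v : ℕ × ℕ, lfun S' v = d * v.1 - e * v.2 := by
    intro v; rw [hS', hdd, hee]; unfold lfun; push_cast; ring
  have lTv : ∀ v : ℕ × ℕ, lfun T v = d * v.1 - e * v.2 := by
    intro v; rw [hdd, hee]; rfl
  have lS'P : lfun S' S'.P = d * T.P.1 - e * (T.P.2 + 1) := by
    rw [lS'v, hS']; push_cast; ring
  have hshift : ∀ v : ℕ × ℕ, lfun S' (v.1, v.2 + 1) = lfun T v - e := by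
    intro v; rw [lS'v, lTv]; push_cast; ring
  -- Step 1: a blocking point on the horizontal axis exists
  have hv : ∃ v ∈ supp h, v.2 = 0 ∧ lfun S' S'.P ≤ lfun S' v := by
    by_contra hcon
    push_neg at hcon
    apply hns
    refine ⟨S', ?_, rfl, rfl⟩
    have hS'P2 : S'.P.2 = T.P.2 + 1 := rfl
    have hS'Q2 : S'.Q.2 = T.Q.2 + 1 := rfl
    refine ⟨mem_supp_pderiv.mp hTP, mem_supp_pderiv.mp hTQ, by omega, ?_, ?_⟩
    · intro v hvs
      rcases Nat.eq_zero_or_pos v.2 with hz | hpos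
      · exact (hcon v hvs hz).le
      · have hw : (v.1, v.2 - 1) ∈ supp h' := by
          rw [hh', mem_supp_pderiv]
          simpa [Nat.sub_add_cancel hpos] using hvs
        have h1 := hTsupp _ hw
        have e3 : lfun S' v = lfun T (v.1, v.2 - 1) - e := by
          have := hshift (v.1, v.2 - 1)
          simpa [Nat.sub_add_cancel hpos] using this
        linarith [lS'P, hshift T.P, e3, h1,
          (show lfun S' S'.P = lfun T T.P - e by
            rw [lS'P, lTv]; ring)]
    · intro v hvs hlf
      rcases Nat.eq_zero_or_pos v.2 with hz | hpos
      · exact absurd hlf.ge (not_le.mpr (hcon v hvs hz))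
      · have hw : (v.1, v.2 - 1) ∈ supp h' := by
          rw [hh', mem_supp_pderiv]
          simpa [Nat.sub_add_cancel hpos] using hvs
        have e3 : lfun S' v = lfun T (v.1, v.2 - 1) - e := by
          have := hshift (v.1, v.2 - 1)
          simpa [Nat.sub_add_cancel hpos] using this
        have e4 : lfun S' S'.P = lfun T T.P - e := by rw [lS'P, lTv]; ring
        have hline : lfun T (v.1, v.2 - 1) = lfun T T.P := by linarith
        have hb := hTmax _ hw hline
        simp only [hS'P2, hS'Q2]
        omega
  obtain ⟨v0, hv0s, hv02, hv0l⟩ := hv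
  have hFQ2 : 1 ≤ F.Q.2 := by omega
  -- v0 lies to the left of F.P
  have hv01 : (v0.1 : ℤ) ≤ (F.P.1 : ℤ) := by
    have h1 := hFsupp v0 hv0s
    unfold lfun at h1
    rw [hv02, hax] at h1
    push_cast at h1
    have hq2 : (0 : ℤ) < (F.Q.2 : ℤ) := by exact_mod_cast hFQ2
    nlinarith
  have hwQ : (F.Q.1, F.Q.2 - 1) ∈ supp h' := by
    rw [hh', mem_supp_pderiv]
    simpa [Nat.sub_add_cancel hFQ2] using hFQ
  have i1 : d * F.Q.1 - e * F.Q.2 + e ≤ d * T.P.1 - e * T.P.2 := by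
    have h1 := hTsupp _ hwQ
    rw [lTv, lTv] at h1
    have hc : ((F.Q.2 - 1 : ℕ) : ℤ) = (F.Q.2 : ℤ) - 1 := by omega
    simp only [hc] at h1
    linarith
  have i2 : d * T.P.1 - e * (T.P.2 + 1) ≤ d * v0.1 := by
    have h1 := hv0l
    rw [lS'P, lS'v] at h1
    rw [hv02] at h1
    push_cast at h1
    linarith
  have i3 : d * v0.1 ≤ d * F.P.1 := by nlinarith
  have hTQ2pos : (0 : ℚ) < (T.Q.2 : ℚ) - T.P.2 := by
    have : (T.P.2 : ℚ) < T.Q.2 := by exact_mod_cast hTlt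
    linarith
  have hFQ2pos : (0 : ℚ) < (F.Q.2 : ℚ) - F.P.2 := by
    have : (F.P.2 : ℚ) < F.Q.2 := by exact_mod_cast hFlt
    linarith
  have key : d * F.Q.1 - e * F.Q.2 ≤ d * F.P.1 := by linarith
  have keyQ : ((T.Q.2 : ℚ) - T.P.2) * F.Q.1 - ((T.Q.1 : ℚ) - T.P.1) * F.Q.2
      ≤ ((T.Q.2 : ℚ) - T.P.2) * F.P.1 := by
    rw [hdd, hee] at key
    exact_mod_cast key
  have haxQ : (F.P.2 : ℚ) = 0 := by exact_mod_cast hax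
  constructor
  · rw [decl_eq hTlt, decl_eq hFlt, div_le_div_iff₀ hTQ2pos hFQ2pos, haxQ]
    nlinarith [keyQ]
  · intro heqd
    -- the parallelism relation
    have heqQ : ((T.P.1 : ℚ) - T.Q.1) * ((F.Q.2 : ℚ) - F.P.2)
        = ((F.P.1 : ℚ) - F.Q.1) * ((T.Q.2 : ℚ) - T.P.2) := by
      rw [decl_eq hTlt, decl_eq hFlt, div_eq_div_iff hTQ2pos.ne' hFQ2pos.ne'] at heqd
      exact heqd
    have heqZ : ((T.P.1 : ℤ) - T.Q.1) * ((F.Q.2 : ℤ) - F.P.2)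
        = ((F.P.1 : ℤ) - F.Q.1) * ((T.Q.2 : ℤ) - T.P.2) := by exact_mod_cast heqQ
    have haxZ : (F.P.2 : ℤ) = 0 := by exact_mod_cast hax
    rw [haxZ] at heqZ
    have hpar : e * (F.Q.2 : ℤ) = d * ((F.Q.1 : ℤ) - F.P.1) := by
      rw [hdd, hee]; linear_combination -heqZ
    -- all inequalities are equalities
    have hX14 : d * F.Q.1 - e * F.Q.2 = d * F.P.1 := by linarith [hpar]
    have eq12 : d * F.Q.1 - e * F.Q.2 + e = d * T.P.1 - e * T.P.2 := by linarith
    -- F.P and F.Q lie on the line of S'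
    have lFP : lfun S' F.P = lfun S' S'.P := by
      rw [lS'P, lS'v]
      have : (F.P.2 : ℤ) = 0 := haxZ
      rw [this]
      linarith
    have lFQ : lfun S' F.Q = lfun S' S'.P := by
      rw [lS'P, lS'v]
      linarith
    have hFQ2Z : (0 : ℤ) < (F.Q.2 : ℤ) := by exact_mod_cast hFQ2
    -- the two lines coincide (as level sets)
    have id1 : ∀ v : ℕ × ℕ, d * lfun F v = (F.Q.2 : ℤ) * lfun S' v := by
      intro v
      rw [lS'v]
      unfold lfun
      rw [hax]
      push_cast
      linear_combination (v.2 : ℤ) * hpar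
    have hlineF : ∀ v : ℕ × ℕ, lfun S' v = lfun S' S'.P ↔ lfun F v = lfun F F.P := by
      intro v
      constructor
      · intro hl
        have h1 : d * lfun F v = d * lfun F F.P := by
          rw [id1 v, id1 F.P, hl, lFP]
        exact mul_left_cancel₀ hdpos.ne' h1
      · intro hl
        have h1 : (F.Q.2 : ℤ) * lfun S' v = (F.Q.2 : ℤ) * lfun S' S'.P := by
          rw [← id1 v, hl, id1 F.P, lFP]
        exact mul_left_cancel₀ hFQ2Z.ne' h1
    -- membership transfer
    have fwd : ∀ q : ℕ × ℕ, q ∈ supp h' → OnSeg T q → OnSeg F (q.1, q.2 + 1) := by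
      intro q hqs hqT
      have hps : (q.1, q.2 + 1) ∈ supp h := by rwa [hh', mem_supp_pderiv] at hqs
      have hlT : lfun T q = lfun T T.P := ((onSeg_iff hTlt q).mp hqT).1
      have hlS' : lfun S' (q.1, q.2 + 1) = lfun S' S'.P := by
        have h2 : lfun S' S'.P = lfun T T.P - e := by rw [lS'P, lTv]; ring
        rw [hshift q, hlT, h2]
      have hlF : lfun F (q.1, q.2 + 1) = lfun F F.P := (hlineF _).mp hlS'
      have hb := hFmax _ hps hlF
      exact (onSeg_iff hFlt _).mpr ⟨hlF, hb.1, hb.2⟩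
    have bwd : ∀ p : ℕ × ℕ, p ∈ supp h → p.2 ≠ 0 → OnSeg F p → OnSeg T (p.1, p.2 - 1) := by
      intro p hps hp2 hpF
      have hp1 : p = ((p.1, p.2 - 1).1, (p.1, p.2 - 1).2 + 1) := by
        have : p.2 - 1 + 1 = p.2 := by omega
        simp [this]
      have hqs : (p.1, p.2 - 1) ∈ supp h' := by
        rw [hh', mem_supp_pderiv]
        simpa using hp1 ▸ hps
      have hlF : lfun F p = lfun F F.P := ((onSeg_iff hFlt p).mp hpF).1
      have hlS' : lfun S' p = lfun S' S'.P := (hlineF p).mpr hlF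
      have hlT : lfun T (p.1, p.2 - 1) = lfun T T.P := by
        have h1 := hshift (p.1, p.2 - 1)
        have h2 : lfun S' S'.P = lfun T T.P - e := by rw [lS'P, lTv]; ring
        rw [← hp1] at h1
        rw [hlS', h2] at h1
        linarith
      have hb := hTmax _ hqs hlT
      exact (onSeg_iff hTlt _).mpr ⟨hlT, hb.1, hb.2⟩
    -- the sum identity
    unfold inPoly
    rw [map_sum]
    have hterm : ∀ p : ℕ × ℕ,
        MvPolynomial.pderiv (1 : Fin 2)
            (MvPolynomial.monomial (Finsupp.single 0 p.1 + Finsupp.single 1 p.2) (coeff2 h p))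
          = MvPolynomial.monomial (Finsupp.single 0 p.1 + Finsupp.single 1 (p.2 - 1))
              (coeff2 h p * (p.2 : ℂ)) := by
      intro p
      rw [MvPolynomial.pderiv_monomial, sub_pair, eval1]
    rw [Finset.sum_congr rfl (fun p _ => hterm p)]
    rw [← Finset.sum_filter_of_ne (p := fun p : ℕ × ℕ => p.2 ≠ 0)
      (f := fun p : ℕ × ℕ => MvPolynomial.monomial
        (Finsupp.single 0 p.1 + Finsupp.single 1 (p.2 - 1)) (coeff2 h p * (p.2 : ℂ)))
      (by
        intro p _ hne hz
        apply hne
        simp [hz])]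
    refine Finset.sum_bij' (i := fun q _ => (q.1, q.2 + 1)) (j := fun p _ => (p.1, p.2 - 1))
      ?_ ?_ ?_ ?_ ?_
    · intro q hq
      rw [Finset.mem_filter] at hq
      obtain ⟨hq1, hq2⟩ := hq
      rw [Finset.mem_filter, Finset.mem_filter]
      refine ⟨⟨?_, fwd q hq1 hq2⟩, by simp⟩
      rwa [hh', mem_supp_pderiv] at hq1
    · intro p hp
      rw [Finset.mem_filter] at hp ⊢
      obtain ⟨hp1, hp2⟩ := hp
      rw [Finset.mem_filter] at hp1
      refine ⟨?_, bwd p hp1.1 hp2 hp1.2⟩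
      rw [hh', mem_supp_pderiv]
      have : p.2 - 1 + 1 = p.2 := by omega
      simpa [this] using hp1.1
    · intro q _; simp
    · intro p hp
      rw [Finset.mem_filter] at hp
      have : p.2 - 1 + 1 = p.2 := by omega
      simp [this]
    · intro q hq
      simp only [hh', coeff2_pderiv, Nat.add_sub_cancel]
      congr 1
      push_cast
      ring
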